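/- Fix a positive integer x and a finite set B ⊆ ℕ. Define F₀ = Σ_{i : 2i ∈ B} C(x,i), F₁ = Σ_{i : 2i+1 ∈ B} C(x,i), F₂ = Σ_{i : 2i+2 ∈ B} C(x,i), where C(x,i) is the binomial coefficient. Viewing F₀F₂ − F₁² as a polynomial in x of degree at most max B, if B contains 0 and some odd number, then there exists a positive integer x ≤ max B + 1 such that F₀F₂ − F₁² ≠ 0 and F₀ ≥ 1 and F₁ ≥ 1. -/

import Mathlib

open Polynomial Finset

noncomputable def chp (i : ℕ) : Polynomial ℚ :=
  Polynomial.C ((i.factorial : ℚ)⁻¹) * descPochhammer ℚ i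

lemma factcast_ne (i : ℕ) : ((i.factorial : ℚ)) ≠ 0 :=
  Nat.cast_ne_zero.2 i.factorial_ne_zero

lemma chp_natDegree (i : ℕ) : (chp i).natDegree = i := by
  unfold chp
  rw [natDegree_C_mul (inv_ne_zero (factcast_ne i)), descPochhammer_natDegree]

lemma chp_coeff_self (i : ℕ) : (chp i).coeff i = (i.factorial : ℚ)⁻¹ := by
  unfold chp
  rw [coeff_C_mul]
  have h := (monic_descPochhammer ℚ i).coeff_natDegree
  rw [descPochhammer_natDegree] at h
  rw [h, mul_one]

lemma chp_coeff_of_lt {i n : ℕ} (h : i < n) : (chp i).coeff n = 0 :=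
  coeff_eq_zero_of_natDegree_lt (by rw [chp_natDegree]; exact h)

lemma chp_eval (x i : ℕ) : (chp i).eval (x : ℚ) = (x.choose i : ℚ) := by
  unfold chp
  rw [eval_mul, eval_C, descPochhammer_eval_eq_descFactorial,
    Nat.descFactorial_eq_factorial_mul_choose]
  push_cast
  field_simp

lemma sumchp_coeff_max (s : Finset ℕ) (hs : s.Nonempty) :
    (∑ i ∈ s, chp i).coeff (s.max' hs) = (((s.max' hs).factorial : ℚ))⁻¹ := by
  rw [finset_sum_coeff]
  rw [Finset.sum_eq_single_of_mem (s.max' hs) (s.max'_mem hs)]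
  · exact chp_coeff_self _
  · intro i hi hne
    exact chp_coeff_of_lt (lt_of_le_of_ne (s.le_max' i hi) hne)

lemma sumchp_natDegree_le (s : Finset ℕ) (n : ℕ) (h : ∀ i ∈ s, i ≤ n) :
    (∑ i ∈ s, chp i).natDegree ≤ n := by
  refine natDegree_sum_le_of_forall_le s chp (fun i hi => ?_)
  rw [chp_natDegree]; exact h i hi

lemma sumchp_ne_zero (s : Finset ℕ) (hs : s.Nonempty) : (∑ i ∈ s, chp i) ≠ 0 := by
  intro h
  have h2 := sumchp_coeff_max s hs
  rw [h] at h2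
  simp only [coeff_zero] at h2
  exact inv_ne_zero (factcast_ne _) h2.symm

lemma sumchp_natDegree (s : Finset ℕ) (hs : s.Nonempty) :
    (∑ i ∈ s, chp i).natDegree = s.max' hs := by
  refine le_antisymm (sumchp_natDegree_le s _ (fun i hi => s.le_max' i hi)) ?_
  refine le_natDegree_of_ne_zero ?_
  rw [sumchp_coeff_max s hs]
  exact inv_ne_zero (factcast_ne _)

lemma sumchp_leadingCoeff (s : Finset ℕ) (hs : s.Nonempty) :
    (∑ i ∈ s, chp i).leadingCoeff = (((s.max' hs).factorial : ℚ))⁻¹ := by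
  rw [leadingCoeff, sumchp_natDegree s hs, sumchp_coeff_max s hs]

lemma fact_lt : ∀ d b : ℕ, 1 ≤ d → d ≤ b →
    b.factorial * b.factorial < (b + d).factorial * (b - d).factorial := by
  intro d
  induction d with
  | zero => intro b h1 _; omega
  | succ d ih =>
    intro b h1 h2
    rcases Nat.eq_zero_or_pos d with rfl | hd
    · -- base case : b!*b! < (b+1)!*(b-1)!
      have hb : 1 ≤ b := by omega
      have e1 : b.factorial = b * (b - 1).factorial := by
        cases b with
        | zero => omega
        | succ n => simp [Nat.factorial_succ]
      have e2 : (b + 1).factorial = (b + 1) * b.factorial := by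
        simp [Nat.factorial_succ]
      have hpos : 0 < b.factorial * (b - 1).factorial :=
        Nat.mul_pos b.factorial_pos (b - 1).factorial_pos
      calc b.factorial * b.factorial = b * (b.factorial * (b - 1).factorial) := by
            rw [mul_comm b.factorial b.factorial]; rw [e1]; ring
        _ < (b + 1) * (b.factorial * (b - 1).factorial) := by
            exact (Nat.mul_lt_mul_right hpos).2 (by omega)
        _ = (b + 1).factorial * (b - 1).factorial := by rw [e2]; ring
    · have hih := ih b hd (by omega)
      refine lt_of_lt_of_le hih ?_
      have e1 : (b - d).factorial = (b - d) * (b - (d + 1)).factorial := by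
        have : b - d = (b - (d + 1)) + 1 := by omega
        rw [this, Nat.factorial_succ]
      have e2 : (b + (d + 1)).factorial = (b + d + 1) * (b + d).factorial := by
        have : b + (d + 1) = (b + d) + 1 := by omega
        rw [this, Nat.factorial_succ]
      calc (b + d).factorial * (b - d).factorial
          = (b - d) * ((b + d).factorial * (b - (d + 1)).factorial) := by rw [e1]; ring
        _ ≤ (b + d + 1) * ((b + d).factorial * (b - (d + 1)).factorial) :=
            Nat.mul_le_mul_right _ (by omega)
        _ = (b + (d + 1)).factorial * (b - (d + 1)).factorial := by rw [e2]; ring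

theorem stmt_9 (B : Finset ℕ) (hne : B.Nonempty) (h0 : 0 ∈ B) (hodd : ∃ b ∈ B, Odd b) :
    ∃ x : ℕ, 1 ≤ x ∧ x ≤ B.max' hne + 1 ∧
      (∑ i ∈ Finset.range (B.max' hne + 1), if 2 * i ∈ B then x.choose i else 0) *
        (∑ i ∈ Finset.range (B.max' hne + 1), if 2 * i + 2 ∈ B then x.choose i else 0) ≠
        (∑ i ∈ Finset.range (B.max' hne + 1), if 2 * i + 1 ∈ B then x.choose i else 0) ^ 2 ∧
      1 ≤ (∑ i ∈ Finset.range (B.max' hne + 1), if 2 * i ∈ B then x.choose i else 0) ∧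
      1 ≤ (∑ i ∈ Finset.range (B.max' hne + 1), if 2 * i + 1 ∈ B then x.choose i else 0) := by
  classical
  set m := B.max' hne with hmdef
  obtain ⟨bo, hboB, k, hk⟩ := hodd
  rw [hk] at hboB
  have hk1 : 2 * k + 1 ≤ m := B.le_max' _ hboB
  set S1 := (Finset.range (m + 1)).filter (fun i => 2 * i + 1 ∈ B) with hS1def
  have hS1ne : S1.Nonempty :=
    ⟨k, Finset.mem_filter.2 ⟨Finset.mem_range.2 (by omega), hboB⟩⟩
  set t := S1.min' hS1ne with htdef
  have htmem : 2 * t + 1 ∈ B := (Finset.mem_filter.1 (S1.min'_mem hS1ne)).2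
  have htmin : ∀ i, 2 * i + 1 ∈ B → t ≤ i := by
    intro i hi
    have hi2 : i ∈ S1 := Finset.mem_filter.2
      ⟨Finset.mem_range.2 (by have := B.le_max' _ hi; omega), hi⟩
    exact S1.min'_le i hi2
  have htm : 2 * t + 1 ≤ m := B.le_max' _ htmem
  have htr : t ∈ Finset.range (m + 1) := Finset.mem_range.2 (by omega)
  have hF0pos : ∀ x : ℕ,
      1 ≤ ∑ i ∈ Finset.range (m + 1), if 2 * i ∈ B then x.choose i else 0 := by
    intro x
    have h0r : (0 : ℕ) ∈ Finset.range (m + 1) := Finset.mem_range.2 (by omega)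
    calc 1 = (if 2 * 0 ∈ B then x.choose 0 else 0) := by simp [h0]
      _ ≤ _ := Finset.single_le_sum (f := fun i => if 2 * i ∈ B then x.choose i else 0)
          (fun i _ => Nat.zero_le _) h0r
  have hF1pos : ∀ x : ℕ, t ≤ x →
      1 ≤ ∑ i ∈ Finset.range (m + 1), if 2 * i + 1 ∈ B then x.choose i else 0 := by
    intro x hx
    calc 1 ≤ x.choose t := Nat.choose_pos hx
      _ = (if 2 * t + 1 ∈ B then x.choose t else 0) := by rw [if_pos htmem]
      _ ≤ _ := Finset.single_le_sum (f := fun i => if 2 * i + 1 ∈ B then x.choose i else 0)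
          (fun i _ => Nat.zero_le _) htr
  by_contra hcon
  push_neg at hcon
  have Heq : ∀ x : ℕ, t ≤ x → 1 ≤ x → x ≤ m + 1 →
      (∑ i ∈ Finset.range (m + 1), if 2 * i ∈ B then x.choose i else 0) *
        (∑ i ∈ Finset.range (m + 1), if 2 * i + 2 ∈ B then x.choose i else 0) =
        (∑ i ∈ Finset.range (m + 1), if 2 * i + 1 ∈ B then x.choose i else 0) ^ 2 := by
    intro x hx0 hx1 hx2
    by_contra hne'
    have h1 := hcon x hx1 hx2 hne' (hF0pos x)
    have h2 := hF1pos x hx0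
    omega
  rcases Nat.lt_or_ge t 2 with ht2 | ht2
  · -- polynomial case : t ≤ 1
    set S0 := (Finset.range (m + 1)).filter (fun i => 2 * i ∈ B) with hS0def
    set S2 := (Finset.range (m + 1)).filter (fun i => 2 * i + 2 ∈ B) with hS2def
    have hS0ne : S0.Nonempty :=
      ⟨0, Finset.mem_filter.2 ⟨Finset.mem_range.2 (by omega), by simpa using h0⟩⟩
    set p0 := ∑ i ∈ S0, chp i with hp0def
    set p1 := ∑ i ∈ S1, chp i with hp1def
    set p2 := ∑ i ∈ S2, chp i with hp2def
    have hev : ∀ (s : Finset ℕ) (x : ℕ),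
        (∑ i ∈ s, chp i).eval (x : ℚ) = ∑ i ∈ s, (x.choose i : ℚ) := by
      intro s x
      rw [Polynomial.eval_finset_sum]
      exact Finset.sum_congr rfl fun i _ => chp_eval x i
    have hev0 : ∀ x : ℕ, p0.eval (x : ℚ) =
        ((∑ i ∈ Finset.range (m + 1), if 2 * i ∈ B then x.choose i else 0 : ℕ) : ℚ) := by
      intro x
      rw [hp0def, hev, hS0def, Finset.sum_filter]
      push_cast
      rfl
    have hev1 : ∀ x : ℕ, p1.eval (x : ℚ) =
        ((∑ i ∈ Finset.range (m + 1), if 2 * i + 1 ∈ B then x.choose i else 0 : ℕ) : ℚ) := by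
      intro x
      rw [hp1def, hev, hS1def, Finset.sum_filter]
      push_cast
      rfl
    have hev2 : ∀ x : ℕ, p2.eval (x : ℚ) =
        ((∑ i ∈ Finset.range (m + 1), if 2 * i + 2 ∈ B then x.choose i else 0 : ℕ) : ℚ) := by
      intro x
      rw [hp2def, hev, hS2def, Finset.sum_filter]
      push_cast
      rfl
    have hg0 : p0 * p2 - p1 ^ 2 = 0 := by
      apply eq_zero_of_natDegree_lt_card_of_eval_eq_zero (ι := Fin (m + 1))
        _ (f := fun n : Fin (m + 1) => (((n : ℕ) + 1 : ℕ) : ℚ))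
      · intro i j hij
        simp only at hij
        push_cast at hij
        have h2 : ((i : ℕ) : ℚ) = ((j : ℕ) : ℚ) := by linarith
        exact Fin.ext (by exact_mod_cast h2)
      · intro n
        have hEq := Heq ((n : ℕ) + 1) (by omega) (by omega) (by omega)
        rw [eval_sub, eval_mul, eval_pow, hev0, hev1, hev2]
        rw [sub_eq_zero]
        exact_mod_cast congrArg (fun z : ℕ => (z : ℚ)) hEq
      · rw [Fintype.card_fin]
        have hd0 : p0.natDegree ≤ m / 2 := by
          refine sumchp_natDegree_le _ _ (fun i hi => ?_)
          have := B.le_max' _ (Finset.mem_filter.1 hi).2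
          omega
        have hd2 : p2.natDegree ≤ m / 2 := by
          refine sumchp_natDegree_le _ _ (fun i hi => ?_)
          have := B.le_max' _ (Finset.mem_filter.1 hi).2
          omega
        have hd1 : p1.natDegree ≤ (m - 1) / 2 := by
          refine sumchp_natDegree_le _ _ (fun i hi => ?_)
          have := B.le_max' _ (Finset.mem_filter.1 hi).2
          omega
        have h1 : (p0 * p2).natDegree ≤ m := le_trans (natDegree_mul_le)
          (by omega)
        have h2 : (p1 ^ 2).natDegree ≤ m := le_trans (natDegree_pow_le)
          (by omega)
        have := natDegree_sub_le (p0 * p2) (p1 ^ 2)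
        omega
    have hmul : p0 * p2 = p1 ^ 2 := sub_eq_zero.1 hg0
    have hp0ne : p0 ≠ 0 := sumchp_ne_zero S0 hS0ne
    have hp1ne : p1 ≠ 0 := sumchp_ne_zero S1 hS1ne
    have hp2ne : p2 ≠ 0 := by
      intro h
      rw [h, mul_zero] at hmul
      exact hp1ne ((pow_eq_zero_iff (n := 2) (by norm_num)).1 hmul.symm)
    have hS2ne : S2.Nonempty := by
      rw [Finset.nonempty_iff_ne_empty]
      intro h
      apply hp2ne
      rw [hp2def, h, Finset.sum_empty]
    set a := S0.max' hS0ne with hadef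
    set b := S1.max' hS1ne with hbdef
    set c := S2.max' hS2ne with hcdef
    have hdeg : a + c = 2 * b := by
      have hd := congrArg natDegree hmul
      rw [natDegree_mul hp0ne hp2ne, natDegree_pow, hp0def, hp1def, hp2def,
        sumchp_natDegree S0 hS0ne, sumchp_natDegree S1 hS1ne,
        sumchp_natDegree S2 hS2ne] at hd
      omega
    have hlead : ((a.factorial : ℚ))⁻¹ * ((c.factorial : ℚ))⁻¹ =
        (((b.factorial : ℚ))⁻¹) ^ 2 := by
      have hl := congrArg leadingCoeff hmul
      rwa [leadingCoeff_mul, leadingCoeff_pow, hp0def, hp1def, hp2def,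
        sumchp_leadingCoeff S0 hS0ne, sumchp_leadingCoeff S1 hS1ne,
        sumchp_leadingCoeff S2 hS2ne] at hl
    have hfacts : a.factorial * c.factorial = b.factorial * b.factorial := by
      have h1 : ((a.factorial * c.factorial : ℕ) : ℚ)⁻¹ =
          ((b.factorial * b.factorial : ℕ) : ℚ)⁻¹ := by
        push_cast
        rw [mul_inv, mul_inv, hlead]
        ring
      have h2 := inv_injective h1
      exact_mod_cast h2
    have hac : c + 1 ≤ a := by
      have hc2 : 2 * c + 2 ∈ B := (Finset.mem_filter.1 (S2.max'_mem hS2ne)).2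
      have hcm : 2 * c + 2 ≤ m := B.le_max' _ hc2
      refine S0.le_max' (c + 1) (Finset.mem_filter.2 ⟨Finset.mem_range.2 (by omega), ?_⟩)
      rw [show 2 * (c + 1) = 2 * c + 2 by ring]
      exact hc2
    have hkey := fact_lt (b - c) b (by omega) (by omega)
    rw [show b + (b - c) = a by omega, show b - (b - c) = c by omega] at hkey
    omega
  · -- numeric case : t ≥ 2
    have hEt := Heq t le_rfl (by omega) (by omega)
    have hF1t : (∑ i ∈ Finset.range (m + 1), if 2 * i + 1 ∈ B then t.choose i else 0) = 1 := by
      rw [Finset.sum_eq_single_of_mem t htr]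
      · rw [if_pos htmem, Nat.choose_self]
      · intro i _ hit
        by_cases hiB : 2 * i + 1 ∈ B
        · rw [if_pos hiB]
          have := htmin i hiB
          exact Nat.choose_eq_zero_of_lt (by omega)
        · rw [if_neg hiB]
    rw [hF1t, one_pow] at hEt
    have hF0t : (∑ i ∈ Finset.range (m + 1), if 2 * i ∈ B then t.choose i else 0) = 1 :=
      Nat.eq_one_of_mul_eq_one_right hEt
    have hF2t : (∑ i ∈ Finset.range (m + 1), if 2 * i + 2 ∈ B then t.choose i else 0) = 1 :=
      Nat.eq_one_of_mul_eq_one_left hEt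
    have hnoeven : ∀ i, 1 ≤ i → i ≤ t → 2 * i ∉ B := by
      intro i h1 h2 hiB
      have hsub : ({0, i} : Finset ℕ) ⊆ Finset.range (m + 1) := by
        intro j hj
        simp only [Finset.mem_insert, Finset.mem_singleton] at hj
        rcases hj with rfl | rfl
        · exact Finset.mem_range.2 (by omega)
        · exact Finset.mem_range.2 (by omega)
      have hle : ∑ j ∈ ({0, i} : Finset ℕ), (if 2 * j ∈ B then t.choose j else 0) ≤
          ∑ i ∈ Finset.range (m + 1), if 2 * i ∈ B then t.choose i else 0 :=
        Finset.sum_le_sum_of_subset hsub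
      rw [Finset.sum_pair (by omega : (0 : ℕ) ≠ i)] at hle
      rw [if_pos (by simpa using h0), if_pos hiB, Nat.choose_zero_right] at hle
      have hcp : 1 ≤ t.choose i := Nat.choose_pos h2
      omega
    have h2t2 : 2 * t + 2 ∈ B := by
      by_contra hnB
      have hzero : (∑ i ∈ Finset.range (m + 1), if 2 * i + 2 ∈ B then t.choose i else 0) = 0 := by
        apply Finset.sum_eq_zero
        intro i _
        by_cases hiB : 2 * i + 2 ∈ B
        · rw [if_pos hiB]
          have hgt : t < i := by
            rcases Nat.lt_or_ge i t with h | h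
            · exfalso
              exact hnoeven (i + 1) (by omega) (by omega)
                (by rw [show 2 * (i + 1) = 2 * i + 2 by ring]; exact hiB)
            · rcases Nat.eq_or_lt_of_le h with rfl | h'
              · exact absurd hiB hnB
              · exact h'
          exact Nat.choose_eq_zero_of_lt hgt
        · rw [if_neg hiB]
      omega
    have h2t2m : 2 * t + 2 ≤ m := B.le_max' _ h2t2
    have hEt1 := Heq (t + 1) (by omega) (by omega) (by omega)
    have hf1low : t + 1 ≤
        (∑ i ∈ Finset.range (m + 1), if 2 * i + 1 ∈ B then (t + 1).choose i else 0) := by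
      calc t + 1 = (if 2 * t + 1 ∈ B then (t + 1).choose t else 0) := by
            rw [if_pos htmem, Nat.choose_succ_self_right]
        _ ≤ _ := Finset.single_le_sum (f := fun i => if 2 * i + 1 ∈ B then (t + 1).choose i else 0)
            (fun i _ => Nat.zero_le _) htr
    have ht1r : t + 1 ∈ Finset.range (m + 1) := Finset.mem_range.2 (by omega)
    have hf0up : (∑ i ∈ Finset.range (m + 1), if 2 * i ∈ B then (t + 1).choose i else 0) ≤ 2 := by
      calc (∑ i ∈ Finset.range (m + 1), if 2 * i ∈ B then (t + 1).choose i else 0)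
          ≤ ∑ i ∈ Finset.range (m + 1),
              ((if i = 0 then 1 else 0) + (if i = t + 1 then 1 else 0)) := by
            refine Finset.sum_le_sum (fun i _ => ?_)
            by_cases hiB : 2 * i ∈ B
            · rw [if_pos hiB]
              rcases Nat.eq_zero_or_pos i with rfl | hip
              · simp
              · rcases Nat.lt_or_ge t i with hti | hti
                · rcases Nat.eq_or_lt_of_le hti with rfl | hti'
                  · simp [Nat.choose_self]
                  · rw [Nat.choose_eq_zero_of_lt (by omega)]
                    omega
                · exact absurd hiB (hnoeven i hip hti)
            · rw [if_neg hiB]; omega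
        _ = 2 := by
            rw [Finset.sum_add_distrib, Finset.sum_ite_eq' (Finset.range (m + 1)) 0,
              Finset.sum_ite_eq' (Finset.range (m + 1)) (t + 1)]
            simp [ht1r]
    have hf2up : (∑ i ∈ Finset.range (m + 1), if 2 * i + 2 ∈ B then (t + 1).choose i else 0)
        ≤ t + 2 := by
      calc (∑ i ∈ Finset.range (m + 1), if 2 * i + 2 ∈ B then (t + 1).choose i else 0)
          ≤ ∑ i ∈ Finset.range (m + 1),
              ((if i = t then t + 1 else 0) + (if i = t + 1 then 1 else 0)) := by
            refine Finset.sum_le_sum (fun i _ => ?_)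
            by_cases hiB : 2 * i + 2 ∈ B
            · rw [if_pos hiB]
              rcases Nat.lt_or_ge i t with hti | hti
              · exfalso
                exact hnoeven (i + 1) (by omega) (by omega)
                  (by rw [show 2 * (i + 1) = 2 * i + 2 by ring]; exact hiB)
              · rcases Nat.eq_or_lt_of_le hti with rfl | hti'
                · rw [Nat.choose_succ_self_right]
                  simp
                · rcases Nat.eq_or_lt_of_le (Nat.succ_le_of_lt hti') with h' | h'
                  · rw [← h', Nat.choose_self]
                    split_ifs <;> omega
                  · rw [Nat.choose_eq_zero_of_lt (by omega)]
                    omega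
            · rw [if_neg hiB]; omega
        _ = t + 2 := by
            rw [Finset.sum_add_distrib, Finset.sum_ite_eq' (Finset.range (m + 1)) t,
              Finset.sum_ite_eq' (Finset.range (m + 1)) (t + 1)]
            simp [htr, ht1r]
    have hsq : (t + 1) ^ 2 ≤ 2 * (t + 2) := by
      calc (t + 1) ^ 2 ≤ (∑ i ∈ Finset.range (m + 1),
            if 2 * i + 1 ∈ B then (t + 1).choose i else 0) ^ 2 :=
          Nat.pow_le_pow_left hf1low 2
        _ = (∑ i ∈ Finset.range (m + 1), if 2 * i ∈ B then (t + 1).choose i else 0) *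
            (∑ i ∈ Finset.range (m + 1), if 2 * i + 2 ∈ B then (t + 1).choose i else 0) :=
          hEt1.symm
        _ ≤ 2 * (t + 2) := Nat.mul_le_mul hf0up hf2up
    nlinarith [hsq, ht2]
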